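/- Let G be cyclic of order p, k a field of characteristic p, V and W kG-modules with W indecomposable with the standard basis w_1,…,w_n. Suppose k[V] is generated as a module over k[V]^G by homogeneous elements of degree at most γ. Then every transfer covariant h = Δ^k(f) w_1 + Δ^{k+1}(f) w_2 + ⋯ + Δ^{p-1}(f) w_s of degree > γ (with f ∈ k[V] homogeneous) lies in k[V]^G_+·(k[V] ⊗ W)^G, i.e., h is decomposable as a covariant. -/

import Mathlib

open MvPolynomial TensorProduct

/-- Index type for the variables of `k[V]` where `V = ⊕_{j<m} V_{nj j}`. -/
abbrev Idx (m : ℕ) (nj : Fin m → ℕ) := Σ j : Fin m, Fin (nj j)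

/-- The action of the generator σ on `k[V]`:
`σ (x_{i,j}) = x_{i,j} + x_{i+1,j}` (and `σ` fixes the last variable of each block). -/
noncomputable def sigmaAct (k : Type*) [CommRing k] {m : ℕ} (nj : Fin m → ℕ) :
    MvPolynomial (Idx m nj) k →ₐ[k] MvPolynomial (Idx m nj) k :=
  aeval (fun v => X v + if h : v.2.1 + 1 < nj v.1 then X ⟨v.1, ⟨v.2.1 + 1, h⟩⟩ else 0)

/-- Δ = σ - 1 as a `k`-linear endomorphism of `k[V]`. -/
noncomputable def Del (k : Type*) [CommRing k] {m : ℕ} (nj : Fin m → ℕ) :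
    MvPolynomial (Idx m nj) k →ₗ[k] MvPolynomial (Idx m nj) k :=
  (sigmaAct k nj).toLinearMap - LinearMap.id

/-- The ring of invariants `k[V]^G` (fixed points of the generator σ). -/
noncomputable def invar (k : Type*) [CommRing k] {m : ℕ} (nj : Fin m → ℕ) :
    Subalgebra k (MvPolynomial (Idx m nj) k) :=
  AlgHom.equalizer (sigmaAct k nj) (AlgHom.id k _)

/-- Matrix of σ on the indecomposable module `W = V_n` in the basis `w_1,…,w_n`,
with `σ • w_i = ∑_{j ≤ i} (-1)^{i-j} w_j`. -/
def sigmaWMat (k : Type*) [CommRing k] (n : ℕ) : Matrix (Fin n) (Fin n) k :=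
  fun a b => if a ≤ b then (-1 : k) ^ ((b : ℕ) - (a : ℕ)) else 0

/-- σ acting on `W = V_n`. -/
noncomputable def sigmaW (k : Type*) [CommRing k] (n : ℕ) : (Fin n → k) →ₗ[k] (Fin n → k) :=
  Matrix.toLin' (sigmaWMat k n)

/-- σ acting diagonally on `k[V] ⊗ W`. -/
noncomputable def sigmaCov (k : Type*) [CommRing k] {m : ℕ} (nj : Fin m → ℕ) (n : ℕ) :
    (MvPolynomial (Idx m nj) k ⊗[k] (Fin n → k)) →ₗ[k]
      (MvPolynomial (Idx m nj) k ⊗[k] (Fin n → k)) :=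
  TensorProduct.map (sigmaAct k nj).toLinearMap (sigmaW k n)

/-- A covariant is a `G`-invariant element of `k[V] ⊗ W`. -/
def IsCovariant (k : Type*) [CommRing k] {m : ℕ} (nj : Fin m → ℕ) {n : ℕ}
    (h : MvPolynomial (Idx m nj) k ⊗[k] (Fin n → k)) : Prop :=
  sigmaCov k nj n h = h

/-- Elements of `k[V] ⊗ W` which are homogeneous of degree `d`. -/
def tensorHomog (k : Type*) [CommRing k] {m : ℕ} (nj : Fin m → ℕ) (n : ℕ) (d : ℕ) :
    Set (MvPolynomial (Idx m nj) k ⊗[k] (Fin n → k)) :=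
  {x | x ∈ Submodule.span k
    {y | ∃ f w, MvPolynomial.IsHomogeneous f d ∧ y = f ⊗ₜ[k] w}}


/-- `h` is decomposable: it lies in `k[V]^G_+ ⋅ (k[V] ⊗ W)^G`. -/
def IsDecomposableCov (k : Type*) [CommRing k] {m : ℕ} (nj : Fin m → ℕ) (n : ℕ)
    (h : MvPolynomial (Idx m nj) k ⊗[k] (Fin n → k)) : Prop :=
  h ∈ Submodule.span k
    {y | ∃ q x, q ∈ invar k nj ∧ (∃ e, 0 < e ∧ MvPolynomial.IsHomogeneous q e) ∧
      IsCovariant k nj x ∧ y = q • x}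

/-- A transfer covariant: `Δ^k(f) w_1 + Δ^{k+1}(f) w_2 + ⋯ + Δ^{p-1}(f) w_s`. -/
noncomputable def transferCov (k : Type*) [CommRing k] {m : ℕ} (nj : Fin m → ℕ) (n : ℕ)
    (p s : ℕ) (f : MvPolynomial (Idx m nj) k) :
    MvPolynomial (Idx m nj) k ⊗[k] (Fin n → k) :=
  ∑ i : Fin n, (if (i : ℕ) < s then ((Del k nj) ^ (p - s + (i : ℕ))) f else 0) ⊗ₜ[k]
    Pi.single i 1

def IsTransferCovariant (k : Type*) [CommRing k] {m : ℕ} (nj : Fin m → ℕ) (n : ℕ) (p : ℕ)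
    (h : MvPolynomial (Idx m nj) k ⊗[k] (Fin n → k)) : Prop :=
  ∃ f s, 0 < s ∧ s ≤ n ∧ s ≤ p ∧ h = transferCov k nj n p s f

/-- The module of covariants is generated over `k[V]^G` in degrees ≤ d. -/
def CovGenLE (k : Type*) [CommRing k] {m : ℕ} (nj : Fin m → ℕ) (n : ℕ) (d : ℕ) : Prop :=
  ∀ x, IsCovariant k nj x → x ∈ Submodule.span k
    {y | ∃ q z, q ∈ invar k nj ∧ IsCovariant k nj z ∧
      (∃ e ≤ d, z ∈ tensorHomog k nj n e) ∧ y = q • z}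

/-- `k[V]` is generated as a `k[V]^G`-module in degrees ≤ d. -/
def PolyGenLE (k : Type*) [CommRing k] {m : ℕ} (nj : Fin m → ℕ) (d : ℕ) : Prop :=
  ∀ f : MvPolynomial (Idx m nj) k, f ∈ Submodule.span k
    {y | ∃ q g, q ∈ invar k nj ∧ (∃ e ≤ d, MvPolynomial.IsHomogeneous g e) ∧ y = q * g}

/-- `k[V]^G` is generated as a `k`-algebra in degrees ≤ d. -/
def AlgGenLE (k : Type*) [CommRing k] {m : ℕ} (nj : Fin m → ℕ) (d : ℕ) : Prop :=
  ∀ f ∈ invar k nj, f ∈ Algebra.adjoin k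
    {g | g ∈ invar k nj ∧ ∃ e ≤ d, MvPolynomial.IsHomogeneous g e}

/-- Noether bound of the module of covariants over `k[V]^G`. -/
noncomputable def betaCov (k : Type*) [CommRing k] {m : ℕ} (nj : Fin m → ℕ) (n : ℕ) : ℕ :=
  sInf {d | CovGenLE k nj n d}

noncomputable def betaPolyMod (k : Type*) [CommRing k] {m : ℕ} (nj : Fin m → ℕ) : ℕ :=
  sInf {d | PolyGenLE k nj d}

noncomputable def betaAlg (k : Type*) [CommRing k] {m : ℕ} (nj : Fin m → ℕ) : ℕ :=
  sInf {d | AlgGenLE k nj d}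

/-- The norm `N_j = ∏_{i=0}^{p-1} σ^i (x_{1,j})`. -/
noncomputable def normJ (k : Type*) [CommRing k] {m : ℕ} (nj : Fin m → ℕ) (p : ℕ)
    (j : Fin m) (h0 : 0 < nj j) : MvPolynomial (Idx m nj) k :=
  ∏ i ∈ Finset.range p, (sigmaAct k nj)^[i] (X ⟨j, ⟨0, h0⟩⟩)


section Aux

variable {k : Type*} [CommRing k] {m : ℕ} {nj : Fin m → ℕ}

lemma sigmaAct_X (v : Idx m nj) :
    sigmaAct k nj (X v) =
      X v + if h : v.2.1 + 1 < nj v.1 then X ⟨v.1, ⟨v.2.1 + 1, h⟩⟩ else 0 :=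
  aeval_X _ v

lemma sigma_toLinearMap_eq : (sigmaAct k nj).toLinearMap = Del k nj + 1 := by
  unfold Del
  rw [Module.End.one_eq_id, sub_add_cancel]

lemma Del_X (v : Idx m nj) :
    Del k nj (X v) =
      if h : v.2.1 + 1 < nj v.1 then X ⟨v.1, ⟨v.2.1 + 1, h⟩⟩ else 0 := by
  simp only [Del, LinearMap.sub_apply, AlgHom.toLinearMap_apply, LinearMap.id_apply,
    sigmaAct_X, add_sub_cancel_left]

lemma Del_pow_X (r : ℕ) : ∀ v : Idx m nj, nj v.1 ≤ v.2.1 + r →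
    ((Del k nj) ^ r) (X v) = 0 := by
  induction r with
  | zero =>
    intro v hv
    have := v.2.2
    omega
  | succ r ih =>
    intro v hv
    rw [pow_succ, Module.End.mul_apply, Del_X]
    split
    · next h => exact ih ⟨v.1, ⟨v.2.1 + 1, h⟩⟩ (by simpa using by omega)
    · simp

lemma algHom_pow_apply (φ : MvPolynomial (Idx m nj) k →ₐ[k] MvPolynomial (Idx m nj) k)
    (t : ℕ) (x : MvPolynomial (Idx m nj) k) :
    (φ ^ t) x = (φ.toLinearMap ^ t) x := by
  induction t generalizing x with
  | zero => simp
  | succ t ih =>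
    rw [pow_succ, AlgHom.mul_apply, pow_succ, Module.End.mul_apply,
      AlgHom.toLinearMap_apply]
    exact ih _

end Aux

section AuxField

variable {k : Type*} [Field k] {m : ℕ} {nj : Fin m → ℕ} (p : ℕ)

lemma end_charP [CharP k p] :
    CharP (Module.End k (MvPolynomial (Idx m nj) k)) p :=
  charP_of_injective_algebraMap' k p

lemma sigma_pow_linearMap [CharP k p] [Fact p.Prime] (hnj : ∀ j, nj j ≤ p) :
    (sigmaAct k nj).toLinearMap ^ p = 1 := by
  haveI := end_charP (k := k) (nj := nj) p
  have hX : ∀ v : Idx m nj, ((sigmaAct k nj).toLinearMap ^ p) (X v) = X v := by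
    intro v
    rw [sigma_toLinearMap_eq, add_pow_char_of_commute _ (Commute.one_right _)]
    simp [LinearMap.add_apply, Del_pow_X p v (by have := hnj v.1; omega)]
  have key : ((sigmaAct k nj) ^ p) = AlgHom.id k (MvPolynomial (Idx m nj) k) := by
    apply MvPolynomial.algHom_ext
    intro v
    rw [algHom_pow_apply, AlgHom.id_apply]
    exact hX v
  apply LinearMap.ext
  intro x
  rw [Module.End.one_apply, ← algHom_pow_apply, key, AlgHom.id_apply]

lemma Del_pow_p [CharP k p] (hp : p.Prime) (hnj : ∀ j, nj j ≤ p) :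
    (Del k nj) ^ p = 0 := by
  haveI : Fact p.Prime := ⟨hp⟩
  haveI := end_charP (k := k) (nj := nj) p
  have hd : Del k nj = (sigmaAct k nj).toLinearMap - 1 := by
    unfold Del; rw [Module.End.one_eq_id]
  rw [hd, sub_pow_char_of_commute _ (Commute.one_right _),
    sigma_pow_linearMap p hnj, one_pow, sub_self]

end AuxField

section Aux2

variable {k : Type*} [CommRing k] {m : ℕ} {nj : Fin m → ℕ}

lemma mem_invar_iff {q : MvPolynomial (Idx m nj) k} :
    q ∈ invar k nj ↔ sigmaAct k nj q = q := by
  show q ∈ AlgHom.equalizer _ _ ↔ _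
  rw [AlgHom.mem_equalizer, AlgHom.id_apply]

lemma Del_mul_invar {q : MvPolynomial (Idx m nj) k} (hq : sigmaAct k nj q = q)
    (g : MvPolynomial (Idx m nj) k) :
    Del k nj (q * g) = q * Del k nj g := by
  simp only [Del, LinearMap.sub_apply, AlgHom.toLinearMap_apply, LinearMap.id_apply,
    map_mul, hq, mul_sub]

lemma Del_pow_mul_invar {q : MvPolynomial (Idx m nj) k} (hq : sigmaAct k nj q = q)
    (r : ℕ) (g : MvPolynomial (Idx m nj) k) :
    ((Del k nj) ^ r) (q * g) = q * ((Del k nj) ^ r) g := by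
  induction r generalizing g with
  | zero => simp
  | succ r ih =>
    rw [pow_succ, Module.End.mul_apply, Del_mul_invar hq, ih, Module.End.mul_apply]

lemma sigmaAct_isHomogeneous {q : MvPolynomial (Idx m nj) k} {d : ℕ}
    (hq : q.IsHomogeneous d) : (sigmaAct k nj q).IsHomogeneous d := by
  have h := hq.aeval
    (fun v : Idx m nj =>
      X v + if h : v.2.1 + 1 < nj v.1 then X ⟨v.1, ⟨v.2.1 + 1, h⟩⟩ else (0 : MvPolynomial (Idx m nj) k))
    (n := 1) ?_
  · simpa [sigmaAct] using h
  · intro v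
    split
    · exact (isHomogeneous_X _ _).add (isHomogeneous_X _ _)
    · simpa using isHomogeneous_X (R := k) v

lemma sigmaAct_homogeneousComponent (q : MvPolynomial (Idx m nj) k) (d : ℕ) :
    sigmaAct k nj (homogeneousComponent d q) = homogeneousComponent d (sigmaAct k nj q) := by
  have h1 : homogeneousComponent d (sigmaAct k nj q)
      = ∑ i ∈ Finset.range (q.totalDegree + 1),
          homogeneousComponent d (sigmaAct k nj (homogeneousComponent i q)) := by
    conv_lhs => rw [← sum_homogeneousComponent q]
    rw [map_sum, map_sum]
  rw [h1]
  have h2 : ∀ i ∈ Finset.range (q.totalDegree + 1),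
      homogeneousComponent d (sigmaAct k nj (homogeneousComponent i q))
      = if d = i then sigmaAct k nj (homogeneousComponent i q) else 0 := by
    intro i _
    exact homogeneousComponent_of_mem ((mem_homogeneousSubmodule _ _).mpr
      (sigmaAct_isHomogeneous (homogeneousComponent_isHomogeneous i q)))
  rw [Finset.sum_congr rfl h2, Finset.sum_ite_eq]
  split
  · rfl
  · next h =>
    rw [Finset.mem_range, not_lt] at h
    rw [homogeneousComponent_eq_zero _ _ (by omega), map_zero]

lemma invar_homogeneousComponent {q : MvPolynomial (Idx m nj) k}
    (hq : sigmaAct k nj q = q) (d : ℕ) :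
    sigmaAct k nj (homogeneousComponent d q) = homogeneousComponent d q := by
  rw [sigmaAct_homogeneousComponent, hq]

lemma homogeneousComponent_mul_homog {g : MvPolynomial (Idx m nj) k} {e D : ℕ}
    (hg : g.IsHomogeneous e) (heD : e ≤ D) (q : MvPolynomial (Idx m nj) k) :
    homogeneousComponent D (q * g) = homogeneousComponent (D - e) q * g := by
  conv_lhs => rw [← sum_homogeneousComponent q]
  rw [Finset.sum_mul, map_sum]
  have h2 : ∀ i ∈ Finset.range (q.totalDegree + 1),
      homogeneousComponent D (homogeneousComponent i q * g)
      = if D - e = i then homogeneousComponent i q * g else 0 := by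
    intro i _
    rw [homogeneousComponent_of_mem ((mem_homogeneousSubmodule _ _).mpr
      ((homogeneousComponent_isHomogeneous i q).mul hg))]
    simp only [show (D = i + e) ↔ (D - e = i) by omega]
  rw [Finset.sum_congr rfl h2, Finset.sum_ite_eq]
  split
  · rfl
  · next h =>
    rw [Finset.mem_range, not_lt] at h
    rw [homogeneousComponent_eq_zero _ _ (by omega), zero_mul]

end Aux2
section Cov

variable {k : Type*} [CommRing k] {m : ℕ} {nj : Fin m → ℕ}

lemma sigmaW_single (n : ℕ) (i : Fin n) :
    sigmaW k n (Pi.single i 1) = ∑ a : Fin n, sigmaWMat k n a i • (Pi.single a 1 : Fin n → k) := by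
  funext b
  simp [sigmaW, Matrix.toLin'_apply, Matrix.mulVec, dotProduct, Pi.single_apply,
    Finset.sum_apply, mul_ite, ite_mul]

lemma key_sum {n p s : ℕ} (hD : (Del k nj) ^ p = 0) (hsn : s ≤ n) (hsp : s ≤ p)
    (g : MvPolynomial (Idx m nj) k) (a : ℕ) :
    ∑ b ∈ Finset.range n, (if a ≤ b then ((-1 : k) ^ (b - a)) else 0) •
      (sigmaAct k nj).toLinearMap (if b < s then ((Del k nj) ^ (p - s + b)) g else 0)
    = if a < s then ((Del k nj) ^ (p - s + a)) g else 0 := by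
  have hsub : Finset.Ico a s ⊆ Finset.range n := by
    intro b hb
    simp only [Finset.mem_Ico] at hb
    simp only [Finset.mem_range]
    omega
  have hzero : ∀ b ∈ Finset.range n, b ∉ Finset.Ico a s →
      (if a ≤ b then ((-1 : k) ^ (b - a)) else 0) •
        (sigmaAct k nj).toLinearMap (if b < s then ((Del k nj) ^ (p - s + b)) g else 0) = 0 := by
    intro b _ hb'
    simp only [Finset.mem_Ico, not_and_or, not_le, not_lt] at hb'
    rcases hb' with h | h
    · rw [if_neg (show ¬ a ≤ b by omega), zero_smul]
    · rw [if_neg (show ¬ b < s by omega), map_zero, smul_zero]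
  rw [← Finset.sum_subset hsub hzero]
  by_cases has : a < s
  · rw [if_pos has, Finset.sum_Ico_eq_sum_range]
    set w : ℕ → MvPolynomial (Idx m nj) k :=
      fun j => (-1 : k) ^ j • ((Del k nj) ^ (p - s + (a + j))) g with hw
    have hterm : ∀ j ∈ Finset.range (s - a),
        (if a ≤ a + j then ((-1 : k) ^ (a + j - a)) else 0) •
          (sigmaAct k nj).toLinearMap
            (if a + j < s then ((Del k nj) ^ (p - s + (a + j))) g else 0)
        = w j - w (j + 1) := by
      intro j hj
      simp only [Finset.mem_range] at hj
      rw [if_pos (by omega), if_pos (by omega),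
        show a + j - a = j from by omega]
      have hS : (sigmaAct k nj).toLinearMap (((Del k nj) ^ (p - s + (a + j))) g)
          = ((Del k nj) ^ (p - s + (a + j) + 1)) g + ((Del k nj) ^ (p - s + (a + j))) g := by
        rw [sigma_toLinearMap_eq, LinearMap.add_apply, Module.End.one_apply]
        congr 1
        rw [pow_succ', Module.End.mul_apply, ← Module.End.mul_apply (Del k nj),
          ← pow_succ', pow_succ', Module.End.mul_apply]
      rw [hS, hw]
      simp only
      rw [show p - s + (a + (j + 1)) = p - s + (a + j) + 1 from by omega, pow_succ]
      module
    rw [Finset.sum_congr rfl hterm, Finset.sum_range_sub' w]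
    rw [hw]
    simp only
    rw [show p - s + (a + (s - a)) = p from by omega, hD]
    simp
  · rw [if_neg has, Finset.Ico_eq_empty (by omega), Finset.sum_empty]

lemma transferCov_isCovariant {n p s : ℕ} (hD : (Del k nj) ^ p = 0)
    (hsn : s ≤ n) (hsp : s ≤ p) (g : MvPolynomial (Idx m nj) k) :
    IsCovariant k nj (transferCov k nj n p s g) := by
  unfold IsCovariant sigmaCov transferCov
  rw [map_sum]
  have step : ∀ i : Fin n,
      TensorProduct.map (sigmaAct k nj).toLinearMap (sigmaW k n)
        ((if (i : ℕ) < s then ((Del k nj) ^ (p - s + (i : ℕ))) g else 0) ⊗ₜ[k] Pi.single i 1)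
      = ∑ a : Fin n, ((if (a : ℕ) ≤ (i : ℕ) then ((-1 : k) ^ ((i : ℕ) - (a : ℕ))) else 0) •
          (sigmaAct k nj).toLinearMap
            (if (i : ℕ) < s then ((Del k nj) ^ (p - s + (i : ℕ))) g else 0)) ⊗ₜ[k]
              Pi.single a (1 : k) := by
    intro i
    rw [TensorProduct.map_tmul, sigmaW_single, tmul_sum]
    refine Finset.sum_congr rfl fun a _ => ?_
    rw [tmul_smul, smul_tmul']
    congr 2
  rw [Finset.sum_congr rfl fun i _ => step i, Finset.sum_comm]
  refine Finset.sum_congr rfl fun a _ => ?_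
  rw [← sum_tmul]
  congr 1
  rw [Fin.sum_univ_eq_sum_range (fun b => (if (a : ℕ) ≤ b then ((-1 : k) ^ (b - (a : ℕ))) else 0) •
    (sigmaAct k nj).toLinearMap (if b < s then ((Del k nj) ^ (p - s + b)) g else 0)) n]
  exact key_sum hD hsn hsp g a

noncomputable def tcMap (k : Type*) [CommRing k] {m : ℕ} (nj : Fin m → ℕ) (n p s : ℕ) :
    MvPolynomial (Idx m nj) k →ₗ[k] MvPolynomial (Idx m nj) k ⊗[k] (Fin n → k) :=
  ∑ i : Fin n, if (i : ℕ) < s then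
    ((TensorProduct.mk k _ _).flip (Pi.single i 1)).comp ((Del k nj) ^ (p - s + (i : ℕ))) else 0

lemma tcMap_apply (n p s : ℕ) (f : MvPolynomial (Idx m nj) k) :
    tcMap k nj n p s f = transferCov k nj n p s f := by
  rw [tcMap, transferCov, LinearMap.sum_apply]
  refine Finset.sum_congr rfl fun i _ => ?_
  split
  · rfl
  · simp

lemma transferCov_invar_smul {q : MvPolynomial (Idx m nj) k} (hq : sigmaAct k nj q = q)
    (n p s : ℕ) (g : MvPolynomial (Idx m nj) k) :
    transferCov k nj n p s (q * g) = q • transferCov k nj n p s g := by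
  rw [transferCov, transferCov, Finset.smul_sum]
  refine Finset.sum_congr rfl fun i _ => ?_
  rw [smul_tmul']
  congr 1
  split
  · rw [Del_pow_mul_invar hq, smul_eq_mul]
  · rw [smul_zero]

end Cov
/-- Proposition: transfer covariants of large degree are decomposable.
If `k[V]` is generated over `k[V]^G` by homogeneous elements of degree ≤ γ, then every
transfer covariant `Δ^k(f)w_1 + ⋯ + Δ^{p-1}(f)w_s` of degree > γ (with `f` homogeneous)
lies in `k[V]^G_+ ⋅ (k[V] ⊗ W)^G`. -/
theorem stmt5 (p : ℕ) (hp : p.Prime) (k : Type*) [Field k] [CharP k p]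
    {m : ℕ} (nj : Fin m → ℕ) (hnj : ∀ j, 1 ≤ nj j ∧ nj j ≤ p)
    (n : ℕ) (hn : 1 ≤ n) (hnp : n ≤ p)
    (γ : ℕ) (hγ : PolyGenLE k nj γ)
    (f : MvPolynomial (Idx m nj) k) (D : ℕ) (hf : MvPolynomial.IsHomogeneous f D)
    (hD : γ < D)
    (s : ℕ) (hs0 : 0 < s) (hsn : s ≤ n) (hsp : s ≤ p) :
    IsDecomposableCov k nj n (transferCov k nj n p s f) := by
  have hΔ : (Del k nj) ^ p = 0 := Del_pow_p p hp (fun j => (hnj j).2)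
  unfold IsDecomposableCov
  set Mdec : Submodule k (MvPolynomial (Idx m nj) k ⊗[k] (Fin n → k)) :=
    Submodule.span k
      {y | ∃ q x, q ∈ invar k nj ∧ (∃ e, 0 < e ∧ MvPolynomial.IsHomogeneous q e) ∧
        IsCovariant k nj x ∧ y = q • x} with hMdec
  have hcomap : f ∈ Submodule.comap ((tcMap k nj n p s) ∘ₗ (homogeneousComponent D)) Mdec := by
    refine Submodule.span_le.2 ?_ (hγ f)
    rintro y ⟨q, g, hq, ⟨e, heγ, hge⟩, rfl⟩
    simp only [SetLike.mem_coe, Submodule.mem_comap, LinearMap.comp_apply]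
    have hqi : sigmaAct k nj q = q := mem_invar_iff.mp hq
    rw [homogeneousComponent_mul_homog hge (by omega) q, tcMap_apply,
      transferCov_invar_smul (invar_homogeneousComponent hqi (D - e))]
    exact Submodule.subset_span
      ⟨homogeneousComponent (D - e) q, transferCov k nj n p s g,
        mem_invar_iff.mpr (invar_homogeneousComponent hqi (D - e)),
        ⟨D - e, by omega, homogeneousComponent_isHomogeneous _ _⟩,
        transferCov_isCovariant hΔ hsn hsp g, rfl⟩
  have hmem := Submodule.mem_comap.mp hcomap
  rw [LinearMap.comp_apply,
    homogeneousComponent_of_mem ((mem_homogeneousSubmodule _ _).mpr hf),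
    if_pos rfl, tcMap_apply] at hmem
  exact hmem
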